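/- Let z ∈ ℂ \ [0,9] and let 𝒢(x) = (1/(4π²)) ∫_{[−π,π]²} e^{i(x₁ξ₁ + x₂ξ₂)} / σ(ξ;z) dξ₁dξ₂, where σ(ξ;z) = z − 6 + 2cos ξ₁ + 2cos ξ₂ + 2cos(ξ₁−ξ₂). Then 𝒢 decays exponentially at infinity: there exist constants C > 0 and c > 0 such that |𝒢(x)| ≤ C e^{−c|x|} for all x ∈ ℤ², where |x| denotes the Euclidean norm. -/

import Mathlib

open MeasureTheory
open Set Real

/-- The Fourier symbol `σ(ξ; z) = z − 6 + 2cos ξ₁ + 2cos ξ₂ + 2cos(ξ₁ − ξ₂)`. -/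
noncomputable def helmholtzSymbol (z : ℂ) (ξ : ℝ × ℝ) : ℂ :=
  z - 6 + 2 * (Real.cos ξ.1 : ℂ) + 2 * (Real.cos ξ.2 : ℂ) + 2 * (Real.cos (ξ.1 - ξ.2) : ℂ)

/-- The lattice Green's function
`𝒢(x) = (1/(4π²)) ∫_{[−π,π]²} e^{i(x₁ξ₁ + x₂ξ₂)} / σ(ξ;z) dξ`. -/
noncomputable def latticeGreen (z : ℂ) (x : ℤ × ℤ) : ℂ :=
  (1 / (4 * (Real.pi : ℂ) ^ 2)) *
    ∫ ξ in Set.Icc ((-Real.pi, -Real.pi) : ℝ × ℝ) ((Real.pi, Real.pi) : ℝ × ℝ),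
      Complex.exp (Complex.I * ((x.1 : ℂ) * (ξ.1 : ℂ) + (x.2 : ℂ) * (ξ.2 : ℂ))) /
        helmholtzSymbol z ξ

/-- The Euclidean norm of a lattice point. -/
noncomputable def latticeNorm (x : ℤ × ℤ) : ℝ :=
  Real.sqrt ((x.1 : ℝ) ^ 2 + (x.2 : ℝ) ^ 2)

noncomputable def csym (z : ℂ) (w₁ w₂ : ℂ) : ℂ :=
  z - 6 + 2 * Complex.cos w₁ + 2 * Complex.cos w₂ + 2 * Complex.cos (w₁ - w₂)

lemma csym_comm (z w₁ w₂ : ℂ) : csym z w₁ w₂ = csym z w₂ w₁ := by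
  unfold csym
  rw [show w₂ - w₁ = -(w₁ - w₂) by ring, Complex.cos_neg]
  ring

lemma csym_period (z w₁ w₂ : ℂ) : csym z (w₁ + 2 * Real.pi) w₂ = csym z w₁ w₂ := by
  unfold csym
  rw [show (Real.pi : ℂ) = (Real.pi : ℂ) from rfl, Complex.cos_add_two_pi,
    show w₁ + 2 * (Real.pi : ℂ) - w₂ = (w₁ - w₂) + 2 * Real.pi by ring, Complex.cos_add_two_pi]

lemma sum_cos_ge (a b : ℝ) : -(3/2 : ℝ) ≤ Real.cos a + Real.cos b + Real.cos (a - b) := by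
  nlinarith [sq_nonneg (Real.cos a + Real.cos b + 1), sq_nonneg (Real.sin a + Real.sin b),
    Real.sin_sq_add_cos_sq a, Real.sin_sq_add_cos_sq b, Real.cos_sub a b]

lemma csym_real_ne (z : ℂ) (hz : ∀ t : ℝ, t ∈ Set.Icc (0 : ℝ) 9 → z ≠ (t : ℂ)) (a b : ℝ) :
    csym z (a : ℂ) (b : ℂ) ≠ 0 := by
  intro h
  set t : ℝ := 6 - 2 * Real.cos a - 2 * Real.cos b - 2 * Real.cos (a - b) with ht
  have hmem : t ∈ Set.Icc (0 : ℝ) 9 := by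
    constructor
    · have := Real.cos_le_one a
      have := Real.cos_le_one b
      have := Real.cos_le_one (a - b)
      simp only [ht]; linarith
    · have := sum_cos_ge a b
      simp only [ht]; linarith
  apply hz t hmem
  unfold csym at h
  rw [ht]
  push_cast at h ⊢
  linear_combination h

lemma helmholtz_eq_csym (z : ℂ) (ξ : ℝ × ℝ) : helmholtzSymbol z ξ = csym z (ξ.1 : ℂ) (ξ.2 : ℂ) := by
  unfold helmholtzSymbol csym
  rw [Complex.ofReal_cos, Complex.ofReal_cos, Complex.ofReal_cos, Complex.ofReal_sub]
lemma csym_continuous (z : ℂ) : Continuous (fun w : ℂ × ℂ => csym z w.1 w.2) := by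
  unfold csym
  exact (((continuous_const.add (continuous_const.mul
    (Complex.continuous_cos.comp continuous_fst)))).add (continuous_const.mul
    (Complex.continuous_cos.comp continuous_snd))).add (continuous_const.mul
    (Complex.continuous_cos.comp (continuous_fst.sub continuous_snd)))

/-- abs of symbol as function of real/imag part data -/
noncomputable def F (z : ℂ) (p : (ℝ × ℝ) × ℝ × ℝ) : ℝ :=
  norm (csym z ((p.1.1 : ℂ) + (p.2.1 : ℂ) * Complex.I) ((p.1.2 : ℂ) + (p.2.2 : ℂ) * Complex.I))

lemma F_continuous (z : ℂ) : Continuous (F z) := by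
  unfold F csym
  apply continuous_norm.comp
  fun_prop

set_option maxHeartbeats 1000000 in
lemma exists_strip_bound (z : ℂ) (hz : ∀ t : ℝ, t ∈ Set.Icc (0 : ℝ) 9 → z ≠ (t : ℂ)) :
    ∃ δ : ℝ, 0 < δ ∧ δ ≤ 1 ∧ ∃ m : ℝ, 0 < m ∧
      ∀ a b s t : ℝ, a ∈ Set.Icc (-Real.pi) Real.pi → b ∈ Set.Icc (-Real.pi) Real.pi →
        |s| ≤ δ → |t| ≤ δ →
        m ≤ norm (csym z ((a : ℂ) + (s : ℂ) * Complex.I) ((b : ℂ) + (t : ℂ) * Complex.I)) := by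
  have hπ := Real.pi_pos
  set K₁ : Set ((ℝ × ℝ) × ℝ × ℝ) :=
    (Set.Icc (-Real.pi) Real.pi ×ˢ Set.Icc (-Real.pi) Real.pi) ×ˢ (Set.Icc (-1 : ℝ) 1 ×ˢ Set.Icc (-1 : ℝ) 1) with hK₁
  have hK₁c : IsCompact K₁ := (isCompact_Icc.prod isCompact_Icc).prod (isCompact_Icc.prod isCompact_Icc)
  set Z : Set ((ℝ × ℝ) × ℝ × ℝ) := K₁ ∩ (F z) ⁻¹' {0} with hZ
  have hZc : IsCompact Z := hK₁c.inter_right ((isClosed_singleton).preimage (F_continuous z))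
  -- choose δ
  obtain ⟨δ, hδ0, hδ1, hδZ⟩ :
      ∃ δ : ℝ, 0 < δ ∧ δ ≤ 1 ∧ ∀ p ∈ Z, δ < max |p.2.1| |p.2.2| := by
    rcases Z.eq_empty_or_nonempty with hE | hNe
    · exact ⟨1, one_pos, le_refl 1, fun p hp => by simp [hE] at hp⟩
    · obtain ⟨p₀, hp₀Z, hmin⟩ := hZc.exists_isMinOn hNe
        (Continuous.continuousOn (by fun_prop : Continuous fun p : (ℝ × ℝ) × ℝ × ℝ => max |p.2.1| |p.2.2|))
      have hpos : 0 < max |p₀.2.1| |p₀.2.2| := by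
        rcases lt_or_ge 0 (max |p₀.2.1| |p₀.2.2|) with h | h
        · exact h
        · exfalso
          have h1 : p₀.2.1 = 0 := by
            have := le_max_left |p₀.2.1| |p₀.2.2|
            have := abs_nonneg p₀.2.1
            have : |p₀.2.1| = 0 := le_antisymm (by linarith [le_max_left |p₀.2.1| |p₀.2.2|]) (abs_nonneg _)
            exact abs_eq_zero.mp this
          have h2 : p₀.2.2 = 0 := by
            have : |p₀.2.2| = 0 := le_antisymm (by linarith [le_max_right |p₀.2.1| |p₀.2.2|]) (abs_nonneg _)
            exact abs_eq_zero.mp this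
          have hF0 : F z p₀ = 0 := hp₀Z.2
          unfold F at hF0
          rw [h1, h2] at hF0
          simp only [Complex.ofReal_zero, zero_mul, add_zero] at hF0
          exact csym_real_ne z hz p₀.1.1 p₀.1.2 (by rwa [← norm_eq_zero])
      refine ⟨max |p₀.2.1| |p₀.2.2| / 2, by linarith, ?_, ?_⟩
      · have : |p₀.2.1| ≤ 1 := abs_le.mpr hp₀Z.1.2.1
        have : |p₀.2.2| ≤ 1 := abs_le.mpr hp₀Z.1.2.2
        have : max |p₀.2.1| |p₀.2.2| ≤ 1 := by
          apply max_le <;> assumption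
        linarith
      · intro p hp
        have := hmin hp
        calc max |p₀.2.1| |p₀.2.2| / 2 < max |p₀.2.1| |p₀.2.2| := by linarith
        _ ≤ max |p.2.1| |p.2.2| := this
  -- nonvanishing on the δ-strip over the square
  have hne : ∀ a b s t : ℝ, a ∈ Set.Icc (-Real.pi) Real.pi → b ∈ Set.Icc (-Real.pi) Real.pi →
      |s| ≤ δ → |t| ≤ δ → F z ((a, b), (s, t)) ≠ 0 := by
    intro a b s t ha hb hs ht hF
    have hpK : ((a, b), (s, t)) ∈ K₁ := by
      refine ⟨⟨ha, hb⟩, ⟨abs_le.mp (hs.trans hδ1), abs_le.mp (ht.trans hδ1)⟩⟩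
    have hpZ : ((a, b), (s, t)) ∈ Z := ⟨hpK, hF⟩
    have := hδZ _ hpZ
    simp only at this
    rcases max_cases |s| |t| with ⟨h, _⟩ | ⟨h, _⟩ <;> rw [h] at this <;> linarith
  -- min on the compact δ-strip
  set Kδ : Set ((ℝ × ℝ) × ℝ × ℝ) :=
    (Set.Icc (-Real.pi) Real.pi ×ˢ Set.Icc (-Real.pi) Real.pi) ×ˢ (Set.Icc (-δ) δ ×ˢ Set.Icc (-δ) δ) with hKδ
  have hKδc : IsCompact Kδ := (isCompact_Icc.prod isCompact_Icc).prod (isCompact_Icc.prod isCompact_Icc)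
  have hKδne : Kδ.Nonempty := ⟨((0, 0), (0, 0)), by
    constructor <;> constructor <;> constructor <;> simp <;> linarith⟩
  obtain ⟨q₀, hq₀, hq₀min⟩ := hKδc.exists_isMinOn hKδne (F_continuous z).continuousOn
  refine ⟨δ, hδ0, hδ1, F z q₀, ?_, ?_⟩
  · have : F z q₀ ≠ 0 := by
      have h1 : |q₀.2.1| ≤ δ := abs_le.mpr hq₀.2.1
      have h2 : |q₀.2.2| ≤ δ := abs_le.mpr hq₀.2.2
      have := hne q₀.1.1 q₀.1.2 q₀.2.1 q₀.2.2 hq₀.1.1 hq₀.1.2 h1 h2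
      simpa using this
    have : 0 ≤ F z q₀ := by unfold F; exact norm_nonneg _
    cases lt_or_eq_of_le this with
    | inl h => exact h
    | inr h => exact absurd h.symm (by assumption)
  · intro a b s t ha hb hs ht
    have hmem : ((a, b), (s, t)) ∈ Kδ := ⟨⟨ha, hb⟩, ⟨abs_le.mp hs, abs_le.mp ht⟩⟩
    have := isMinOn_iff.mp hq₀min ((a, b), (s, t)) hmem
    simpa [F] using this

lemma contour_shift (n : ℤ) (g : ℂ → ℂ) (ε : ℝ)
    (hper : ∀ w : ℂ, g (w + 2 * Real.pi) = g w)
    (hd : ∀ w : ℂ, w.re ∈ Set.Icc (-Real.pi) Real.pi → w.im ∈ Set.uIcc 0 ε →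
      DifferentiableAt ℂ g w) :
    ∫ t in (-Real.pi : ℝ)..Real.pi, Complex.exp (Complex.I * n * t) * g t
      = ∫ t in (-Real.pi : ℝ)..Real.pi,
          Complex.exp (Complex.I * n * (t + ε * Complex.I)) * g (t + ε * Complex.I) := by
  have hπ := Real.pi_pos
  set f : ℂ → ℂ := fun w => Complex.exp (Complex.I * n * w) * g w with hf
  set z₀ : ℂ := (((-Real.pi : ℝ)) : ℂ) with hz₀
  set w₀ : ℂ := ((Real.pi : ℝ) : ℂ) + (ε : ℂ) * Complex.I with hw₀
  have hre1 : z₀.re = -Real.pi := by simp [hz₀]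
  have him1 : z₀.im = 0 := by simp [hz₀]
  have hre2 : w₀.re = Real.pi := by simp [hw₀]
  have him2 : w₀.im = ε := by simp [hw₀]
  have hfd : DifferentiableOn ℂ f (Set.uIcc z₀.re w₀.re ×ℂ Set.uIcc z₀.im w₀.im) := by
    rw [hre1, him1, hre2, him2]
    intro w hw
    rw [Complex.mem_reProdIm] at hw
    have hw1 : w.re ∈ Set.Icc (-Real.pi) Real.pi := by
      have := hw.1
      rwa [Set.uIcc_of_le (by linarith : -Real.pi ≤ Real.pi)] at this
    have h1 : DifferentiableAt ℂ (fun w : ℂ => Complex.exp (Complex.I * n * w)) w :=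
      Complex.differentiable_exp.differentiableAt.comp w
        (differentiableAt_id.const_mul (Complex.I * n))
    exact (h1.mul (hd w hw1 hw.2)).differentiableWithinAt
  have H := Complex.integral_boundary_rect_eq_zero_of_differentiableOn f z₀ w₀ hfd
  rw [hre1, him1, hre2, him2] at H
  have hv : (∫ y in (0:ℝ)..ε, f ((Real.pi : ℝ) + (y : ℂ) * Complex.I))
      = ∫ y in (0:ℝ)..ε, f ((-Real.pi : ℝ) + (y : ℂ) * Complex.I) := by
    apply intervalIntegral.integral_congr
    intro y _
    have harg : ((Real.pi : ℝ) : ℂ) + (y : ℂ) * Complex.I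
        = (((-Real.pi : ℝ) : ℂ) + (y : ℂ) * Complex.I) + 2 * Real.pi := by
      push_cast; ring
    rw [hf]
    simp only
    rw [harg, hper, mul_add, Complex.exp_add,
      show Complex.I * (n : ℂ) * (2 * (Real.pi : ℂ)) = (n : ℤ) * (2 * (Real.pi : ℂ) * Complex.I) by
        push_cast; ring,
      Complex.exp_int_mul_two_pi_mul_I, mul_one]
  rw [hv] at H
  simp only [Complex.ofReal_zero, zero_mul, add_zero, smul_eq_mul] at H
  have hAB : (∫ x : ℝ in (-Real.pi)..Real.pi, f x)
      = ∫ x : ℝ in (-Real.pi)..Real.pi, f ((x : ℂ) + (ε : ℂ) * Complex.I) := by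
    linear_combination H
  simpa only [hf] using hAB

lemma decay_bound (n : ℤ) (g : ℂ → ℂ) (δ M : ℝ) (hδ : 0 < δ)
    (hper : ∀ w : ℂ, g (w + 2 * Real.pi) = g w)
    (hd : ∀ w : ℂ, w.re ∈ Set.Icc (-Real.pi) Real.pi → |w.im| ≤ δ → DifferentiableAt ℂ g w)
    (hbound : ∀ w : ℂ, w.re ∈ Set.Icc (-Real.pi) Real.pi → |w.im| ≤ δ →
      norm (g w) ≤ M) :
    norm (∫ t in (-Real.pi : ℝ)..Real.pi, Complex.exp (Complex.I * n * t) * g t)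
      ≤ 2 * Real.pi * M * Real.exp (-δ * |(n : ℝ)|) := by
  have hπ := Real.pi_pos
  set ε : ℝ := if 0 ≤ n then δ else -δ with hε
  have hεabs : |ε| ≤ δ := by
    rw [hε]; split <;> simp [abs_of_pos hδ, abs_of_neg (neg_neg_iff_pos.mpr hδ), le_refl] <;> linarith
  have hnε : (n : ℝ) * ε = |(n : ℝ)| * δ := by
    rw [hε]; split
    · rename_i h
      rw [abs_of_nonneg (by exact_mod_cast h : (0:ℝ) ≤ (n:ℝ))]
    · rename_i h
      push_neg at h
      rw [abs_of_neg (by exact_mod_cast h : (n:ℝ) < 0)]; ring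
  have hsub : ∀ y : ℝ, y ∈ Set.uIcc 0 ε → |y| ≤ δ := by
    intro y hy
    rcases le_or_gt 0 ε with h | h
    · rw [Set.uIcc_of_le h] at hy
      rw [abs_le]
      constructor <;> [linarith [hy.1]; exact hy.2.trans (le_of_abs_le hεabs)]
    · rw [Set.uIcc_of_ge h.le] at hy
      rw [abs_le]
      refine ⟨?_, by linarith [hy.2]⟩
      have := neg_le_of_abs_le hεabs
      linarith [hy.1]
  rw [contour_shift n g ε hper (fun w hw1 hw2 => hd w hw1 (hsub _ hw2))]
  have key : ∀ t ∈ Set.uIoc (-Real.pi) Real.pi,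
      ‖Complex.exp (Complex.I * n * ((t : ℂ) + (ε : ℂ) * Complex.I)) * g ((t : ℂ) + (ε : ℂ) * Complex.I)‖
        ≤ M * Real.exp (-δ * |(n : ℝ)|) := by
    intro t ht
    have htIcc : t ∈ Set.Icc (-Real.pi) Real.pi := by
      rw [Set.uIoc_of_le (by linarith : -Real.pi ≤ Real.pi)] at ht
      exact ⟨ht.1.le, ht.2⟩
    rw [norm_mul]
    have he : norm (Complex.exp (Complex.I * n * ((t : ℂ) + (ε : ℂ) * Complex.I)))
        = Real.exp (-δ * |(n : ℝ)|) := by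
      rw [show Complex.I * (n : ℂ) * ((t : ℂ) + (ε : ℂ) * Complex.I)
          = ((-((n : ℝ) * ε) : ℝ) : ℂ) + (((n : ℝ) * t : ℝ) : ℂ) * Complex.I by
        push_cast
        linear_combination ((n : ℂ) * (ε : ℂ)) * Complex.I_sq]
      rw [Complex.norm_exp]
      congr 1
      simp [Complex.add_re, Complex.mul_re]
      rw [hnε]; ring
    rw [he]
    have hg : norm (g ((t : ℂ) + (ε : ℂ) * Complex.I)) ≤ M := by
      apply hbound
      · simpa using htIcc
      · simpa using hεabs
    calc Real.exp (-δ * |(n : ℝ)|) * norm (g ((t : ℂ) + (ε : ℂ) * Complex.I))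
        ≤ Real.exp (-δ * |(n : ℝ)|) * M := by
          exact mul_le_mul_of_nonneg_left hg (Real.exp_nonneg _)
      _ = M * Real.exp (-δ * |(n : ℝ)|) := by ring
  have := intervalIntegral.norm_integral_le_of_norm_le_const key
  calc ‖∫ t in (-Real.pi : ℝ)..Real.pi,
        Complex.exp (Complex.I * n * ((t : ℂ) + (ε : ℂ) * Complex.I)) * g ((t : ℂ) + (ε : ℂ) * Complex.I)‖
      ≤ M * Real.exp (-δ * |(n : ℝ)|) * |Real.pi - -Real.pi| := this
    _ = 2 * Real.pi * M * Real.exp (-δ * |(n : ℝ)|) := by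
        rw [abs_of_pos (by linarith : (0:ℝ) < Real.pi - -Real.pi)]; ring

lemma csym_diff (z b : ℂ) : Differentiable ℂ fun w => csym z w b := by
  unfold csym
  fun_prop

lemma abs_exp_I_real (r : ℝ) : norm (Complex.exp ((r : ℂ) * Complex.I)) = 1 := by
  rw [Complex.norm_exp]
  simp

set_option maxHeartbeats 1000000 in
lemma inner_int_bound (z : ℂ) {δ m : ℝ} (hδ : 0 < δ) (hm : 0 < m)
    (hB : ∀ a b s t : ℝ, a ∈ Set.Icc (-Real.pi) Real.pi → b ∈ Set.Icc (-Real.pi) Real.pi →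
        |s| ≤ δ → |t| ≤ δ →
        m ≤ norm (csym z ((a : ℂ) + (s : ℂ) * Complex.I) ((b : ℂ) + (t : ℂ) * Complex.I)))
    (n : ℤ) (b : ℝ) (hb : b ∈ Set.Icc (-Real.pi) Real.pi) (c : ℂ) (hc : ‖c‖ = 1) :
    norm (∫ t in (-Real.pi : ℝ)..Real.pi,
        Complex.exp (Complex.I * n * t) * (c / csym z (t : ℂ) (b : ℂ)))
      ≤ 2 * Real.pi * (1 / m) * Real.exp (-δ * |(n : ℝ)|) := by
  have habs : ∀ w : ℂ, w.re ∈ Set.Icc (-Real.pi) Real.pi → |w.im| ≤ δ →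
      m ≤ norm (csym z w (b : ℂ)) := by
    intro w hw1 hw2
    have := hB w.re b w.im 0 hw1 hb hw2 (by simpa using hδ.le)
    simpa [Complex.re_add_im] using this
  apply decay_bound n (fun w => c / csym z w (b : ℂ)) δ (1 / m) hδ
  · intro w
    rw [csym_period]
  · intro w hw1 hw2
    have hne : csym z w (b : ℂ) ≠ 0 := by
      intro h0
      have := habs w hw1 hw2
      rw [h0] at this
      simp at this
      linarith
    exact (differentiableAt_const c).div ((csym_diff z (b : ℂ)).differentiableAt) hne
  · intro w hw1 hw2
    rw [norm_div, hc]
    have h1 := habs w hw1 hw2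
    have h2 : (0 : ℝ) < norm (csym z w (b : ℂ)) := lt_of_lt_of_le hm h1
    rw [div_le_div_iff₀ h2 hm, one_mul, one_mul]
    exact h1

lemma integrand_cont (z : ℂ) (hz : ∀ t : ℝ, t ∈ Set.Icc (0 : ℝ) 9 → z ≠ (t : ℂ)) (x1 x2 : ℤ) :
    Continuous fun ξ : ℝ × ℝ =>
      Complex.exp (Complex.I * ((x1 : ℂ) * (ξ.1 : ℂ) + (x2 : ℂ) * (ξ.2 : ℂ))) /
        helmholtzSymbol z ξ := by
  apply Continuous.div
  · apply Complex.continuous_exp.comp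
    fun_prop
  · show Continuous fun ξ : ℝ × ℝ => helmholtzSymbol z ξ
    unfold helmholtzSymbol
    fun_prop
  · intro ξ
    rw [helmholtz_eq_csym]
    exact csym_real_ne z hz ξ.1 ξ.2

lemma split_snd (z : ℂ) (x1 x2 : ℤ) (a t : ℝ) :
    Complex.exp (Complex.I * ((x1 : ℂ) * (a : ℂ) + (x2 : ℂ) * (t : ℂ))) /
        helmholtzSymbol z (a, t)
      = Complex.exp (Complex.I * (x2 : ℂ) * (t : ℂ)) *
        (Complex.exp (Complex.I * (x1 : ℂ) * (a : ℂ)) / csym z (t : ℂ) (a : ℂ)) := by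
  rw [helmholtz_eq_csym]
  simp only
  rw [csym_comm, mul_add, Complex.exp_add]
  ring

lemma split_fst (z : ℂ) (x1 x2 : ℤ) (t b : ℝ) :
    Complex.exp (Complex.I * ((x1 : ℂ) * (t : ℂ) + (x2 : ℂ) * (b : ℂ))) /
        helmholtzSymbol z (t, b)
      = Complex.exp (Complex.I * (x1 : ℂ) * (t : ℂ)) *
        (Complex.exp (Complex.I * (x2 : ℂ) * (b : ℂ)) / csym z (t : ℂ) (b : ℂ)) := by
  rw [helmholtz_eq_csym]
  simp only
  rw [mul_add, Complex.exp_add]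
  ring

lemma abs_exp_unit (k : ℤ) (a : ℝ) :
    norm (Complex.exp (Complex.I * (k : ℂ) * (a : ℂ))) = 1 := by
  rw [show Complex.I * (k : ℂ) * (a : ℂ) = (((k : ℝ) * a : ℝ) : ℂ) * Complex.I by push_cast; ring]
  exact abs_exp_I_real _

lemma green_prefactor : norm (1 / (4 * (Real.pi : ℂ) ^ 2)) = 1 / (4 * Real.pi ^ 2) := by
  have hπ := Real.pi_pos
  rw [norm_div, norm_one,
    show (4 : ℂ) * (Real.pi : ℂ) ^ 2 = ((4 * Real.pi ^ 2 : ℝ) : ℂ) by push_cast; ring,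
    Complex.norm_real, Real.norm_eq_abs, abs_of_pos (by positivity)]

lemma green_bound_snd (z : ℂ) (hz : ∀ t : ℝ, t ∈ Set.Icc (0 : ℝ) 9 → z ≠ (t : ℂ))
    {δ m : ℝ} (hδ : 0 < δ) (hm : 0 < m)
    (hB : ∀ a b s t : ℝ, a ∈ Set.Icc (-Real.pi) Real.pi → b ∈ Set.Icc (-Real.pi) Real.pi →
        |s| ≤ δ → |t| ≤ δ →
        m ≤ norm (csym z ((a : ℂ) + (s : ℂ) * Complex.I) ((b : ℂ) + (t : ℂ) * Complex.I)))
    (x : ℤ × ℤ) :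
    norm (latticeGreen z x) ≤ (1 / m) * Real.exp (-δ * |((x.2 : ℤ) : ℝ)|) := by
  have hπ := Real.pi_pos
  have hle : (-Real.pi : ℝ) ≤ Real.pi := by linarith
  set f : ℝ × ℝ → ℂ := fun ξ =>
    Complex.exp (Complex.I * ((x.1 : ℂ) * (ξ.1 : ℂ) + (x.2 : ℂ) * (ξ.2 : ℂ))) /
      helmholtzSymbol z ξ with hf
  have hcont : Continuous f := integrand_cont z hz x.1 x.2
  have hIcc : Set.Icc ((-Real.pi, -Real.pi) : ℝ × ℝ) ((Real.pi, Real.pi) : ℝ × ℝ)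
      = Set.Icc (-Real.pi) Real.pi ×ˢ Set.Icc (-Real.pi) Real.pi := Set.Icc_prod_eq _ _
  have hInt : IntegrableOn f (Set.Icc (-Real.pi) Real.pi ×ˢ Set.Icc (-Real.pi) Real.pi) :=
    hcont.continuousOn.integrableOn_compact (isCompact_Icc.prod isCompact_Icc)
  have hdouble : (∫ ξ in Set.Icc ((-Real.pi, -Real.pi) : ℝ × ℝ) ((Real.pi, Real.pi) : ℝ × ℝ), f ξ)
      = ∫ a in Set.Icc (-Real.pi) Real.pi, ∫ t in Set.Icc (-Real.pi) Real.pi, f (a, t) := by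
    rw [hIcc, Measure.volume_eq_prod]
    apply setIntegral_prod
    rwa [← Measure.volume_eq_prod]
  -- inner bound
  have hinner : ∀ a ∈ Set.Icc (-Real.pi) Real.pi,
      norm (∫ t in Set.Icc (-Real.pi) Real.pi, f (a, t))
        ≤ 2 * Real.pi * (1 / m) * Real.exp (-δ * |((x.2 : ℤ) : ℝ)|) := by
    intro a ha
    have heq : (∫ t in Set.Icc (-Real.pi) Real.pi, f (a, t))
        = ∫ t in (-Real.pi : ℝ)..Real.pi,
            Complex.exp (Complex.I * (x.2 : ℂ) * (t : ℂ)) *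
              (Complex.exp (Complex.I * (x.1 : ℂ) * (a : ℂ)) / csym z (t : ℂ) (a : ℂ)) := by
      rw [MeasureTheory.integral_Icc_eq_integral_Ioc, ← intervalIntegral.integral_of_le hle]
      apply intervalIntegral.integral_congr
      intro t _
      exact split_snd z x.1 x.2 a t
    rw [heq]
    exact inner_int_bound z hδ hm hB x.2 a ha _ (abs_exp_unit x.1 a)
  -- outer bound
  have houter : norm (∫ a in Set.Icc (-Real.pi) Real.pi,
        ∫ t in Set.Icc (-Real.pi) Real.pi, f (a, t))
      ≤ 2 * Real.pi * (2 * Real.pi * (1 / m) * Real.exp (-δ * |((x.2 : ℤ) : ℝ)|)) := by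
    rw [MeasureTheory.integral_Icc_eq_integral_Ioc, ← intervalIntegral.integral_of_le hle]
    have := intervalIntegral.norm_integral_le_of_norm_le_const
      (C := 2 * Real.pi * (1 / m) * Real.exp (-δ * |((x.2 : ℤ) : ℝ)|))
      (f := fun a => ∫ t in Set.Icc (-Real.pi) Real.pi, f (a, t))
      (a := -Real.pi) (b := Real.pi) ?_
    · calc ‖∫ a in (-Real.pi : ℝ)..Real.pi, ∫ t in Set.Icc (-Real.pi) Real.pi, f (a, t)‖
          ≤ 2 * Real.pi * (1 / m) * Real.exp (-δ * |((x.2 : ℤ) : ℝ)|) * |Real.pi - -Real.pi| := this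
        _ = 2 * Real.pi * (2 * Real.pi * (1 / m) * Real.exp (-δ * |((x.2 : ℤ) : ℝ)|)) := by
            rw [abs_of_pos (by linarith : (0:ℝ) < Real.pi - -Real.pi)]; ring
    · intro a ha
      have haIcc : a ∈ Set.Icc (-Real.pi) Real.pi := by
        rw [Set.uIoc_of_le hle] at ha
        exact ⟨ha.1.le, ha.2⟩
      exact hinner a haIcc
  -- assemble
  unfold latticeGreen
  rw [norm_mul, green_prefactor]
  rw [show (∫ ξ in Set.Icc ((-Real.pi, -Real.pi) : ℝ × ℝ) ((Real.pi, Real.pi) : ℝ × ℝ),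
      Complex.exp (Complex.I * ((x.1 : ℂ) * (ξ.1 : ℂ) + (x.2 : ℂ) * (ξ.2 : ℂ))) /
        helmholtzSymbol z ξ) = ∫ a in Set.Icc (-Real.pi) Real.pi,
          ∫ t in Set.Icc (-Real.pi) Real.pi, f (a, t) from hdouble]
  calc (1 / (4 * Real.pi ^ 2)) * norm (∫ a in Set.Icc (-Real.pi) Real.pi,
        ∫ t in Set.Icc (-Real.pi) Real.pi, f (a, t))
      ≤ (1 / (4 * Real.pi ^ 2)) *
          (2 * Real.pi * (2 * Real.pi * (1 / m) * Real.exp (-δ * |((x.2 : ℤ) : ℝ)|))) := by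
        apply mul_le_mul_of_nonneg_left houter (by positivity)
    _ = (1 / m) * Real.exp (-δ * |((x.2 : ℤ) : ℝ)|) := by
        field_simp
        ring

lemma green_bound_fst (z : ℂ) (hz : ∀ t : ℝ, t ∈ Set.Icc (0 : ℝ) 9 → z ≠ (t : ℂ))
    {δ m : ℝ} (hδ : 0 < δ) (hm : 0 < m)
    (hB : ∀ a b s t : ℝ, a ∈ Set.Icc (-Real.pi) Real.pi → b ∈ Set.Icc (-Real.pi) Real.pi →
        |s| ≤ δ → |t| ≤ δ →
        m ≤ norm (csym z ((a : ℂ) + (s : ℂ) * Complex.I) ((b : ℂ) + (t : ℂ) * Complex.I)))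
    (x : ℤ × ℤ) :
    norm (latticeGreen z x) ≤ (1 / m) * Real.exp (-δ * |((x.1 : ℤ) : ℝ)|) := by
  have hπ := Real.pi_pos
  have hle : (-Real.pi : ℝ) ≤ Real.pi := by linarith
  set f : ℝ × ℝ → ℂ := fun ξ =>
    Complex.exp (Complex.I * ((x.1 : ℂ) * (ξ.1 : ℂ) + (x.2 : ℂ) * (ξ.2 : ℂ))) /
      helmholtzSymbol z ξ with hf
  have hcont : Continuous f := integrand_cont z hz x.1 x.2
  have hIcc : Set.Icc ((-Real.pi, -Real.pi) : ℝ × ℝ) ((Real.pi, Real.pi) : ℝ × ℝ)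
      = Set.Icc (-Real.pi) Real.pi ×ˢ Set.Icc (-Real.pi) Real.pi := Set.Icc_prod_eq _ _
  have hInt : IntegrableOn f (Set.Icc (-Real.pi) Real.pi ×ˢ Set.Icc (-Real.pi) Real.pi) :=
    hcont.continuousOn.integrableOn_compact (isCompact_Icc.prod isCompact_Icc)
  have hInt' : Integrable f
      (((volume : Measure ℝ).restrict (Set.Icc (-Real.pi) Real.pi)).prod
        ((volume : Measure ℝ).restrict (Set.Icc (-Real.pi) Real.pi))) := by
    rw [Measure.prod_restrict]
    rw [IntegrableOn, Measure.volume_eq_prod] at hInt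
    exact hInt
  have hdouble : (∫ ξ in Set.Icc ((-Real.pi, -Real.pi) : ℝ × ℝ) ((Real.pi, Real.pi) : ℝ × ℝ), f ξ)
      = ∫ b in Set.Icc (-Real.pi) Real.pi, ∫ t in Set.Icc (-Real.pi) Real.pi, f (t, b) := by
    rw [hIcc, Measure.volume_eq_prod, ← Measure.prod_restrict]
    exact integral_prod_symm f hInt'
  have hinner : ∀ b ∈ Set.Icc (-Real.pi) Real.pi,
      norm (∫ t in Set.Icc (-Real.pi) Real.pi, f (t, b))
        ≤ 2 * Real.pi * (1 / m) * Real.exp (-δ * |((x.1 : ℤ) : ℝ)|) := by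
    intro b hb
    have heq : (∫ t in Set.Icc (-Real.pi) Real.pi, f (t, b))
        = ∫ t in (-Real.pi : ℝ)..Real.pi,
            Complex.exp (Complex.I * (x.1 : ℂ) * (t : ℂ)) *
              (Complex.exp (Complex.I * (x.2 : ℂ) * (b : ℂ)) / csym z (t : ℂ) (b : ℂ)) := by
      rw [MeasureTheory.integral_Icc_eq_integral_Ioc, ← intervalIntegral.integral_of_le hle]
      apply intervalIntegral.integral_congr
      intro t _
      exact split_fst z x.1 x.2 t b
    rw [heq]
    exact inner_int_bound z hδ hm hB x.1 b hb _ (abs_exp_unit x.2 b)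
  have houter : norm (∫ b in Set.Icc (-Real.pi) Real.pi,
        ∫ t in Set.Icc (-Real.pi) Real.pi, f (t, b))
      ≤ 2 * Real.pi * (2 * Real.pi * (1 / m) * Real.exp (-δ * |((x.1 : ℤ) : ℝ)|)) := by
    rw [MeasureTheory.integral_Icc_eq_integral_Ioc, ← intervalIntegral.integral_of_le hle]
    have := intervalIntegral.norm_integral_le_of_norm_le_const
      (C := 2 * Real.pi * (1 / m) * Real.exp (-δ * |((x.1 : ℤ) : ℝ)|))
      (f := fun b => ∫ t in Set.Icc (-Real.pi) Real.pi, f (t, b))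
      (a := -Real.pi) (b := Real.pi) ?_
    · calc ‖∫ b in (-Real.pi : ℝ)..Real.pi, ∫ t in Set.Icc (-Real.pi) Real.pi, f (t, b)‖
          ≤ 2 * Real.pi * (1 / m) * Real.exp (-δ * |((x.1 : ℤ) : ℝ)|) * |Real.pi - -Real.pi| := this
        _ = 2 * Real.pi * (2 * Real.pi * (1 / m) * Real.exp (-δ * |((x.1 : ℤ) : ℝ)|)) := by
            rw [abs_of_pos (by linarith : (0:ℝ) < Real.pi - -Real.pi)]; ring
    · intro b hb
      have hbIcc : b ∈ Set.Icc (-Real.pi) Real.pi := by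
        rw [Set.uIoc_of_le hle] at hb
        exact ⟨hb.1.le, hb.2⟩
      exact hinner b hbIcc
  unfold latticeGreen
  rw [norm_mul, green_prefactor]
  rw [show (∫ ξ in Set.Icc ((-Real.pi, -Real.pi) : ℝ × ℝ) ((Real.pi, Real.pi) : ℝ × ℝ),
      Complex.exp (Complex.I * ((x.1 : ℂ) * (ξ.1 : ℂ) + (x.2 : ℂ) * (ξ.2 : ℂ))) /
        helmholtzSymbol z ξ) = ∫ b in Set.Icc (-Real.pi) Real.pi,
          ∫ t in Set.Icc (-Real.pi) Real.pi, f (t, b) from hdouble]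
  calc (1 / (4 * Real.pi ^ 2)) * norm (∫ b in Set.Icc (-Real.pi) Real.pi,
        ∫ t in Set.Icc (-Real.pi) Real.pi, f (t, b))
      ≤ (1 / (4 * Real.pi ^ 2)) *
          (2 * Real.pi * (2 * Real.pi * (1 / m) * Real.exp (-δ * |((x.1 : ℤ) : ℝ)|))) := by
        apply mul_le_mul_of_nonneg_left houter (by positivity)
    _ = (1 / m) * Real.exp (-δ * |((x.1 : ℤ) : ℝ)|) := by
        field_simp
        ring

theorem latticeGreen_exponential_decay (z : ℂ)
    (hz : ∀ t : ℝ, t ∈ Set.Icc (0 : ℝ) 9 → z ≠ (t : ℂ)) :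
    ∃ C > (0 : ℝ), ∃ c > (0 : ℝ), ∀ x : ℤ × ℤ,
      ‖latticeGreen z x‖ ≤ C * Real.exp (-c * latticeNorm x) := by
  obtain ⟨δ, hδ0, hδ1, m, hm, hB⟩ := exists_strip_bound z hz
  refine ⟨1 / m, by positivity, δ / 2, by positivity, ?_⟩
  intro x
  have hnorm : latticeNorm x ≤ |((x.1 : ℤ) : ℝ)| + |((x.2 : ℤ) : ℝ)| := by
    unfold latticeNorm
    rw [show |((x.1 : ℤ) : ℝ)| + |((x.2 : ℤ) : ℝ)|
        = Real.sqrt ((|((x.1 : ℤ) : ℝ)| + |((x.2 : ℤ) : ℝ)|) ^ 2) from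
      (Real.sqrt_sq (by positivity)).symm]
    apply Real.sqrt_le_sqrt
    nlinarith [sq_abs ((x.1 : ℤ) : ℝ), sq_abs ((x.2 : ℤ) : ℝ),
      mul_nonneg (abs_nonneg ((x.1 : ℤ) : ℝ)) (abs_nonneg ((x.2 : ℤ) : ℝ))]
  rcases le_total |((x.1 : ℤ) : ℝ)| |((x.2 : ℤ) : ℝ)| with h | h
  · have h1 := green_bound_snd z hz hδ0 hm hB x
    have h2 : -δ * |((x.2 : ℤ) : ℝ)| ≤ -(δ / 2) * latticeNorm x := by nlinarith
    calc norm (latticeGreen z x) ≤ (1 / m) * Real.exp (-δ * |((x.2 : ℤ) : ℝ)|) := h1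
      _ ≤ (1 / m) * Real.exp (-(δ / 2) * latticeNorm x) :=
          mul_le_mul_of_nonneg_left (Real.exp_le_exp.mpr h2) (by positivity)
  · have h1 := green_bound_fst z hz hδ0 hm hB x
    have h2 : -δ * |((x.1 : ℤ) : ℝ)| ≤ -(δ / 2) * latticeNorm x := by nlinarith
    calc norm (latticeGreen z x) ≤ (1 / m) * Real.exp (-δ * |((x.1 : ℤ) : ℝ)|) := h1
      _ ≤ (1 / m) * Real.exp (-(δ / 2) * latticeNorm x) :=
          mul_le_mul_of_nonneg_left (Real.exp_le_exp.mpr h2) (by positivity)
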